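/- Let X be a locally compact subset of ℝ^N equipped with a positive Borel measure μ, and let E be a vector sublattice of the real-valued functions on X containing the restrictions to X of the test functions 1, pr_1, …, pr_N, −pr_1, …, −pr_N and Σ_{k=1}^N pr_k². Let (T_n) be a sequence of weakly nonlinear (sublinear and translatable) and monotone operators from E into E, and set U_n := (1/n) Σ_{k=1}^n T_k (the Cesàro means). Then each U_n is weakly nonlinear and monotone, and if U_n(h)(x) → h(x) for μ-almost every x ∈ X for each of the test functions h, then for every f ∈ E that is bounded and whose set of points of discontinuity is μ-null one has U_n(f)(x) → f(x) for μ-almost every x ∈ X. -/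

import Mathlib

open MeasureTheory Filter Topology Set

/-- **Cesàro means.** If `(T n)` is a sequence of weakly nonlinear and
monotone operators from a vector sublattice `E` (of functions on a locally compact
`X ⊆ ℝ^N`, containing the test functions) into itself, then the Cesàro means
`U n = (1/n) Σ_{k=1}^n T k` are weakly nonlinear and monotone operators from `E` into
`E`, and the Korovkin-type criterion for a.e. convergence holds for them: if
`U n h → h` `μ`-a.e. for each test function `h`, then `U n f → f` `μ`-a.e. for every
bounded `f ∈ E` whose set of discontinuity points is `μ`-null. -/
theorem korovkin_ae_cesaro {N : ℕ} (X : Set (Fin N → ℝ)) [LocallyCompactSpace X]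
    (μ : Measure X)
    (E : Set (X → ℝ))
    -- `E` is a vector sublattice of `𝓕(X)`
    (hEadd : ∀ f ∈ E, ∀ g ∈ E, f + g ∈ E)
    (hEsmul : ∀ (c : ℝ), ∀ f ∈ E, c • f ∈ E)
    (hEsup : ∀ f ∈ E, ∀ g ∈ E, f ⊔ g ∈ E)
    -- `E` contains the test functions
    (hone : (fun _ : X => (1 : ℝ)) ∈ E)
    (hpr : ∀ k : Fin N, (fun x : X => (x : Fin N → ℝ) k) ∈ E)
    (hprneg : ∀ k : Fin N, (fun x : X => -((x : Fin N → ℝ) k)) ∈ E)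
    (hsq : (fun x : X => ∑ k, ((x : Fin N → ℝ) k) ^ 2) ∈ E)
    -- `(T n)` weakly nonlinear and monotone, from `E` into `E`
    (T : ℕ → (X → ℝ) → (X → ℝ))
    (hmap : ∀ n, ∀ f ∈ E, T n f ∈ E)
    (hsubadd : ∀ n, ∀ f ∈ E, ∀ g ∈ E, T n (f + g) ≤ T n f + T n g)
    (hhom : ∀ n, ∀ (α : ℝ), 0 ≤ α → ∀ f ∈ E, T n (α • f) = α • T n f)
    (hmono : ∀ n, ∀ f ∈ E, ∀ g ∈ E, f ≤ g → T n f ≤ T n g)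
    (htrans : ∀ n, ∀ f ∈ E, ∀ (α : ℝ), 0 ≤ α →
      T n (f + α • (fun _ : X => (1 : ℝ))) = T n f + α • T n (fun _ : X => (1 : ℝ)))
    -- the Cesàro means `U n = (1/n) Σ_{k=1}^n T k`
    (U : ℕ → (X → ℝ) → (X → ℝ))
    (hU : ∀ n f, U n f = ((n : ℝ))⁻¹ • ∑ k ∈ Finset.Icc 1 n, T k f) :
    -- each `U n` is a weakly nonlinear and monotone operator from `E` into `E`
    ((∀ n, 1 ≤ n →
      ((∀ f ∈ E, U n f ∈ E) ∧
       (∀ f ∈ E, ∀ g ∈ E, U n (f + g) ≤ U n f + U n g) ∧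
       (∀ (α : ℝ), 0 ≤ α → ∀ f ∈ E, U n (α • f) = α • U n f) ∧
       (∀ f ∈ E, ∀ g ∈ E, f ≤ g → U n f ≤ U n g) ∧
       (∀ f ∈ E, ∀ (α : ℝ), 0 ≤ α →
         U n (f + α • (fun _ : X => (1 : ℝ)))
           = U n f + α • U n (fun _ : X => (1 : ℝ))))) ∧
    -- and the Korovkin a.e. criterion holds for the sequence `(U n)`
    (((∀ᵐ x ∂μ, Tendsto (fun n => U n (fun _ => 1) x) atTop (𝓝 1)) ∧
      (∀ k : Fin N, ∀ᵐ x ∂μ,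
        Tendsto (fun n => U n (fun y : X => (y : Fin N → ℝ) k) x) atTop
          (𝓝 ((x : Fin N → ℝ) k))) ∧
      (∀ k : Fin N, ∀ᵐ x ∂μ,
        Tendsto (fun n => U n (fun y : X => -((y : Fin N → ℝ) k)) x) atTop
          (𝓝 (-((x : Fin N → ℝ) k)))) ∧
      (∀ᵐ x ∂μ,
        Tendsto (fun n => U n (fun y : X => ∑ k, ((y : Fin N → ℝ) k) ^ 2) x) atTop
          (𝓝 (∑ k, ((x : Fin N → ℝ) k) ^ 2)))) →
      ∀ f ∈ E, (∃ M : ℝ, ∀ x, |f x| ≤ M) → μ {x | ¬ ContinuousAt f x} = 0 →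
        ∀ᵐ x ∂μ, Tendsto (fun n => U n f x) atTop (𝓝 (f x)))) := by
  classical
  have h0E : (0 : X → ℝ) ∈ E := by
    simpa using hEsmul 0 _ hone
  have hEsum : ∀ {ι : Type} (s : Finset ι) (g : ι → X → ℝ),
      (∀ i ∈ s, g i ∈ E) → (∑ i ∈ s, g i) ∈ E := by
    intro ι s g hg
    induction s using Finset.induction_on with
    | empty => simpa using h0E
    | @insert i s hi ih =>
      rw [Finset.sum_insert hi]
      exact hEadd _ (hg i (Finset.mem_insert_self i s)) _
        (ih fun j hj => hg j (Finset.mem_insert_of_mem hj))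
  have hUapp : ∀ n f x, U n f x = ((n : ℝ))⁻¹ * ∑ k ∈ Finset.Icc 1 n, T k f x := by
    intro n f x
    rw [hU]
    simp [Finset.sum_apply]
  have hUmem : ∀ n, ∀ f ∈ E, U n f ∈ E := by
    intro n f hf
    rw [hU]
    exact hEsmul _ _ (hEsum _ _ fun k _ => hmap k f hf)
  have hUsub : ∀ n, ∀ f ∈ E, ∀ g ∈ E, U n (f + g) ≤ U n f + U n g := by
    intro n f hf g hg x
    simp only [Pi.add_apply, hUapp]
    rw [← mul_add, ← Finset.sum_add_distrib]
    refine mul_le_mul_of_nonneg_left (Finset.sum_le_sum fun k _ => ?_) (by positivity)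
    exact hsubadd k f hf g hg x
  have hUhom : ∀ n (α : ℝ), 0 ≤ α → ∀ f ∈ E, U n (α • f) = α • U n f := by
    intro n α hα f hf
    funext x
    simp only [Pi.smul_apply, smul_eq_mul, hUapp]
    have hk : ∀ k ∈ Finset.Icc 1 n, T k (α • f) x = α * T k f x := by
      intro k _
      rw [hhom k α hα f hf]
      simp
    rw [Finset.sum_congr rfl hk, ← Finset.mul_sum]
    ring
  have hUmono : ∀ n, ∀ f ∈ E, ∀ g ∈ E, f ≤ g → U n f ≤ U n g := by
    intro n f hf g hg hle x
    simp only [hUapp]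
    refine mul_le_mul_of_nonneg_left (Finset.sum_le_sum fun k _ => ?_) (by positivity)
    exact hmono k f hf g hg hle x
  have hUtrans0 : ∀ n, ∀ f ∈ E, ∀ (α : ℝ), 0 ≤ α →
      U n (f + α • (fun _ : X => (1 : ℝ)))
        = U n f + α • U n (fun _ : X => (1 : ℝ)) := by
    intro n f hf α hα
    funext x
    simp only [Pi.add_apply, Pi.smul_apply, smul_eq_mul, hUapp]
    have hk : ∀ k ∈ Finset.Icc 1 n,
        T k (f + α • (fun _ : X => (1 : ℝ))) x
          = T k f x + α * T k (fun _ : X => (1 : ℝ)) x := by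
      intro k _
      rw [htrans k f hf α hα]
      simp
    rw [Finset.sum_congr rfl hk, Finset.sum_add_distrib, ← Finset.mul_sum]
    ring
  have hT0 : ∀ k, T k (0 : X → ℝ) = 0 := by
    intro k
    have := hhom k 0 le_rfl _ hone
    simpa using this
  have hUzero : ∀ n, U n (0 : X → ℝ) = 0 := by
    intro n
    funext x
    simp [hUapp, hT0]
  have hUtransAll : ∀ n, ∀ f ∈ E, ∀ (α : ℝ),
      U n (f + α • (fun _ : X => (1 : ℝ)))
        = U n f + α • U n (fun _ : X => (1 : ℝ)) := by
    intro n f hf α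
    rcases le_or_gt 0 α with hα | hα
    · exact hUtrans0 n f hf α hα
    · have hmem : f + α • (fun _ : X => (1 : ℝ)) ∈ E :=
        hEadd _ hf _ (hEsmul _ _ hone)
      have h2 := hUtrans0 n _ hmem (-α) (by linarith)
      have h3 : (f + α • (fun _ : X => (1 : ℝ))) + (-α) • (fun _ : X => (1 : ℝ)) = f := by
        funext y
        simp
      rw [h3] at h2
      funext y
      have := congrFun h2 y
      simp only [Pi.add_apply, Pi.smul_apply, smul_eq_mul] at this ⊢
      linarith
  have hUconst : ∀ n (γ : ℝ),
      U n (γ • (fun _ : X => (1 : ℝ))) = γ • U n (fun _ : X => (1 : ℝ)) := by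
    intro n γ
    have := hUtransAll n 0 h0E γ
    simpa [hUzero n] using this
  have hUsum_le : ∀ n, ∀ {ι : Type} (s : Finset ι) (g : ι → X → ℝ),
      (∀ i ∈ s, g i ∈ E) → U n (∑ i ∈ s, g i) ≤ ∑ i ∈ s, U n (g i) := by
    intro n ι s g hg
    induction s using Finset.induction_on with
    | empty => simp [hUzero n]
    | @insert i s hi ih =>
      rw [Finset.sum_insert hi, Finset.sum_insert hi]
      have h1 : U n (g i + ∑ j ∈ s, g j) ≤ U n (g i) + U n (∑ j ∈ s, g j) :=
        hUsub n _ (hg i (Finset.mem_insert_self i s)) _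
          (hEsum _ _ fun j hj => hg j (Finset.mem_insert_of_mem hj))
      exact le_trans h1 (add_le_add le_rfl
        (ih fun j hj => hg j (Finset.mem_insert_of_mem hj)))
  refine ⟨fun n _ => ⟨hUmem n, hUsub n, fun α hα f hf => hUhom n α hα f hf,
    hUmono n, fun f hf α hα => hUtrans0 n f hf α hα⟩, ?_⟩
  rintro ⟨hT1, hTp, hTpn, hTs⟩ f hf ⟨M, hM⟩ hnull
  have hcont : ∀ᵐ x ∂μ, ContinuousAt f x := ae_iff.mpr hnull
  have hpAll : ∀ᵐ x ∂μ, ∀ k : Fin N,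
      Tendsto (fun n => U n (fun y : X => (y : Fin N → ℝ) k) x) atTop
        (𝓝 ((x : Fin N → ℝ) k)) := ae_all_iff.mpr hTp
  have hpnAll : ∀ᵐ x ∂μ, ∀ k : Fin N,
      Tendsto (fun n => U n (fun y : X => -((y : Fin N → ℝ) k)) x) atTop
        (𝓝 (-((x : Fin N → ℝ) k))) := ae_all_iff.mpr hTpn
  filter_upwards [hT1, hpAll, hpnAll, hTs, hcont] with x hx1 hxp hxpn hxs hxc
  rw [Metric.tendsto_atTop]
  intro ε hε
  have hε' : 0 < ε / 4 := by linarith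
  obtain ⟨δ, hδ, hδf⟩ := Metric.continuousAt_iff.mp hxc (ε / 4) hε'
  have hMx : 0 ≤ M := le_trans (abs_nonneg _) (hM x)
  set ε' : ℝ := ε / 4 with hε'def
  set xv : Fin N → ℝ := (x : Fin N → ℝ) with hxv
  set c : ℝ := 2 * M / δ ^ 2 with hc
  have hc0 : 0 ≤ c := by positivity
  set S : ℝ := ∑ k, xv k ^ 2 with hSdef
  have hS0 : 0 ≤ S := Finset.sum_nonneg fun k _ => sq_nonneg _
  set sfun : X → ℝ := fun y : X => ∑ k, ((y : Fin N → ℝ) k) ^ 2 with hsfun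
  set a : Fin N → ℝ := fun k => 2 * c * |xv k| with ha
  have ha0 : ∀ k, 0 ≤ a k := fun k => by rw [ha]; positivity
  set e : Fin N → X → ℝ := fun k =>
    if 0 ≤ xv k then (fun y : X => -((y : Fin N → ℝ) k))
    else (fun y : X => ((y : Fin N → ℝ) k)) with he
  have heE : ∀ k, e k ∈ E := by
    intro k
    rw [he]
    by_cases hk : 0 ≤ xv k
    · simpa [hk] using hprneg k
    · simpa [hk] using hpr k
  have hkey : ∀ k (y : X), a k * e k y = -(2 * c * xv k) * ((y : Fin N → ℝ) k) := by
    intro k y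
    rw [ha, he]
    by_cases hk : 0 ≤ xv k
    · simp only [hk, if_true, abs_of_nonneg hk]
      ring
    · simp only [hk, if_false, abs_of_neg (lt_of_not_ge hk)]
      ring
  set φ : X → ℝ := c • sfun + ∑ k, a k • e k with hφ
  have hφE : φ ∈ E :=
    hEadd _ (hEsmul c _ hsq) _ (hEsum _ _ fun k _ => hEsmul _ _ (heE k))
  have hφval : ∀ y : X,
      φ y = c * sfun y + ∑ k, -(2 * c * xv k) * ((y : Fin N → ℝ) k) := by
    intro y
    rw [hφ]
    simp only [Pi.add_apply, Pi.smul_apply, smul_eq_mul, Finset.sum_apply]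
    rw [Finset.sum_congr rfl fun k _ => hkey k y]

  have hq : ∀ y : X,
      φ y + c * S = c * ∑ k, (((y : Fin N → ℝ) k) - xv k) ^ 2 := by
    intro y
    rw [hφval, hsfun, hSdef]
    simp only
    rw [Finset.mul_sum, Finset.mul_sum, Finset.mul_sum, ← Finset.sum_add_distrib,
      ← Finset.sum_add_distrib]
    exact Finset.sum_congr rfl fun k _ => by ring
  have hest : ∀ y : X, |f y - f x| ≤ ε' + (φ y + c * S) := by
    intro y
    rcases lt_or_ge (∑ k, (((y : Fin N → ℝ) k) - xv k) ^ 2) (δ ^ 2) with hlt | hge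
    · have hdist : dist y x < δ := by
        rw [Subtype.dist_eq, dist_pi_lt_iff hδ]
        intro k
        rw [Real.dist_eq]
        have h1 : (((y : Fin N → ℝ) k) - xv k) ^ 2 < δ ^ 2 :=
          lt_of_le_of_lt
            (Finset.single_le_sum (fun i _ => sq_nonneg
              ((((y : Fin N → ℝ)) i) - xv i)) (Finset.mem_univ k)) hlt
        exact lt_of_pow_lt_pow_left₀ 2 hδ.le (by rw [sq_abs]; exact h1)
      have hf' : |f y - f x| < ε' := by
        rw [← Real.dist_eq]
        exact hδf hdist
      have hnn : 0 ≤ φ y + c * S := by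
        rw [hq]
        positivity
      linarith
    · have h2M : |f y - f x| ≤ 2 * M := by
        have h1 := hM y
        have h2 := hM x
        have h3 : |f y - f x| ≤ |f y| + |f x| := by
          have := abs_add_le (f y) (-(f x))
          simpa [sub_eq_add_neg] using this
        linarith
      have hcq : 2 * M ≤ φ y + c * S := by
        rw [hq]
        have h4 : c * δ ^ 2 ≤ c * ∑ k, (((y : Fin N → ℝ) k) - xv k) ^ 2 :=
          mul_le_mul_of_nonneg_left hge hc0
        have h5 : c * δ ^ 2 = 2 * M := by
          rw [hc]
          field_simp
        linarith
      linarith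
  -- convergence of the comparison sequence
  have hTe : ∀ k, Tendsto (fun n => U n (e k) x) atTop (𝓝 (e k x)) := by
    intro k
    by_cases hk : 0 ≤ xv k
    · have h1 := hxpn k
      rw [he]
      simp only [hk, if_true]
      exact h1
    · have h1 := hxp k
      rw [he]
      simp only [hk, if_false]
      exact h1
  set Rn : ℕ → ℝ := fun n => c * U n sfun x + ∑ k, a k * U n (e k) x with hRn
  have hRle : ∀ n, U n φ x ≤ Rn n := by
    intro n
    have h1 : U n φ ≤ U n (c • sfun) + U n (∑ k, a k • e k) := by
      rw [hφ]
      exact hUsub n _ (hEsmul c _ hsq) _ (hEsum _ _ fun k _ => hEsmul _ _ (heE k))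
    have h2 : U n (c • sfun) = c • U n sfun := hUhom n c hc0 _ hsq
    have h3 : U n (∑ k, a k • e k) ≤ ∑ k, U n (a k • e k) :=
      hUsum_le n _ _ fun k _ => hEsmul _ _ (heE k)
    have h4 : ∀ k, U n (a k • e k) = a k • U n (e k) :=
      fun k => hUhom n _ (ha0 k) _ (heE k)
    have h5 := h1 x
    have h6 := h3 x
    simp only [Pi.add_apply, h2, Pi.smul_apply, smul_eq_mul, Finset.sum_apply] at h5 h6
    rw [hRn]
    simp only
    calc U n φ x ≤ c * U n sfun x + U n (∑ k, a k • e k) x := h5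
      _ ≤ c * U n sfun x + ∑ k, U n (a k • e k) x := by linarith
      _ = c * U n sfun x + ∑ k, a k * U n (e k) x := by
          congr 1
          exact Finset.sum_congr rfl fun k _ => by rw [h4 k]; simp
  have hRlim : Tendsto Rn atTop (𝓝 (c * S + ∑ k, a k * e k x)) := by
    rw [hRn]
    exact (hxs.const_mul c).add
      (tendsto_finset_sum _ fun k _ => (hTe k).const_mul (a k))
  have hLval : c * S + ∑ k, a k * e k x = -(c * S) := by
    have : ∀ k, a k * e k x = -(2 * c * xv k) * xv k := fun k => hkey k x
    rw [Finset.sum_congr rfl fun k _ => this k, hSdef, Finset.mul_sum]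
    rw [← Finset.sum_add_distrib, ← Finset.sum_neg_distrib]
    exact Finset.sum_congr rfl fun k _ => by ring
  rw [hLval] at hRlim
  -- the three eventual estimates
  obtain ⟨N1, hN1⟩ := Metric.tendsto_atTop.mp hRlim ε' hε'
  set β : ℝ := c * S + f x + ε' with hβ
  have hβlim : Tendsto (fun n => β * U n (fun _ : X => (1 : ℝ)) x) atTop (𝓝 β) := by
    have := hx1.const_mul β
    simpa using this
  obtain ⟨N2, hN2⟩ := Metric.tendsto_atTop.mp hβlim ε' hε'
  set γ : ℝ := f x - ε' - c * S with hγ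
  have hγlim : Tendsto (fun n => γ * U n (fun _ : X => (1 : ℝ)) x) atTop (𝓝 γ) := by
    have := hx1.const_mul γ
    simpa using this
  obtain ⟨N3, hN3⟩ := Metric.tendsto_atTop.mp hγlim ε' hε'
  refine ⟨max N1 (max N2 N3), fun n hn => ?_⟩
  have hn1 := hN1 n (le_trans (le_max_left _ _) hn)
  have hn2 := hN2 n (le_trans (le_max_left _ _) (le_trans (le_max_right _ _) hn))
  have hn3 := hN3 n (le_trans (le_max_right _ _) (le_trans (le_max_right _ _) hn))
  rw [Real.dist_eq] at hn1 hn2 hn3 ⊢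
  have hRub : Rn n ≤ -(c * S) + ε' := by
    have := abs_lt.mp hn1
    linarith [this.2]
  have hβub : β * U n (fun _ : X => (1 : ℝ)) x ≤ β + ε' := by
    have := abs_lt.mp hn2
    linarith [this.2]
  have hγlb : γ - ε' ≤ γ * U n (fun _ : X => (1 : ℝ)) x := by
    have := abs_lt.mp hn3
    linarith [this.1]
  -- upper bound
  have hup : U n f x ≤ f x + 3 * ε' := by
    have hle1 : f ≤ φ + β • (fun _ : X => (1 : ℝ)) := by
      intro y
      simp only [Pi.add_apply, Pi.smul_apply, smul_eq_mul, mul_one, hβ]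
      have h2 := (abs_le.mp (hest y)).2
      linarith
    have h1 : U n f ≤ U n (φ + β • (fun _ : X => (1 : ℝ))) :=
      hUmono n f hf _ (hEadd _ hφE _ (hEsmul _ _ hone)) hle1
    have h2 : U n (φ + β • (fun _ : X => (1 : ℝ)))
        = U n φ + β • U n (fun _ : X => (1 : ℝ)) := hUtransAll n φ hφE β
    have h3 := h1 x
    rw [h2] at h3
    simp only [Pi.add_apply, Pi.smul_apply, smul_eq_mul] at h3
    have h4 := hRle n
    calc U n f x ≤ U n φ x + β * U n (fun _ : X => (1 : ℝ)) x := h3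
      _ ≤ (-(c * S) + ε') + (β + ε') := by linarith
      _ = f x + 3 * ε' := by rw [hβ]; ring
  -- lower bound
  have hlow : f x - 3 * ε' ≤ U n f x := by
    have hle2 : γ • (fun _ : X => (1 : ℝ)) ≤ f + φ := by
      intro y
      have h2 := (abs_le.mp (hest y)).1
      simp only [Pi.add_apply, Pi.smul_apply, smul_eq_mul, mul_one, hγ]
      linarith
    have h1 : U n (γ • (fun _ : X => (1 : ℝ))) ≤ U n (f + φ) :=
      hUmono n _ (hEsmul _ _ hone) _ (hEadd _ hf _ hφE) hle2
    have h2 : U n (f + φ) ≤ U n f + U n φ := hUsub n f hf φ hφE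
    have h3 : U n (γ • (fun _ : X => (1 : ℝ)))
        = γ • U n (fun _ : X => (1 : ℝ)) := hUconst n γ
    have h4 := h1 x
    have h5 := h2 x
    rw [h3] at h4
    simp only [Pi.add_apply, Pi.smul_apply, smul_eq_mul] at h4 h5
    have h6 := hRle n
    have h7 : γ - ε' - (-(c * S) + ε') ≤ U n f x := by linarith
    rw [hγ] at h7
    linarith
  have habs : |U n f x - f x| ≤ 3 * ε' := by
    rw [abs_le]
    constructor <;> linarith
  have : 3 * ε' < ε := by rw [hε'def]; linarith
  linarith [abs_nonneg (U n f x - f x), habs]
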